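/- Saturated d-spaces are stable under reversion: let (X, dX) be a saturated d-space and let RdX = {t ↦ p(1−t) : p ∈ dX} be the set of reversed directed paths. Then (X, RdX) is a d-space; for every open U ⊆ X, a continuous map c : U → I is a directed function of (X, RdX) on U if and only if 1 − c is a directed function of (X, dX) on U; and (X, RdX) is saturated. -/
import Mathlib


open unitInterval Topology Set

/-- Concatenation of two continuous paths `p q : C(I, X)` with `p 1 = q 0`,
traversing `p` on `[0, 1/2]` and `q` on `[1/2, 1]` (both at double speed). -/
noncomputable def concatPath {X : Type*} [TopologicalSpace X]
    (p q : C(unitInterval, X)) (h : p 1 = q 0) : C(unitInterval, X) :=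
  ((⟨p, rfl, rfl⟩ : Path (p 0) (p 1)).trans
    ((⟨q, rfl, rfl⟩ : Path (q 0) (q 1)).cast h rfl)).toContinuousMap

/-- A d-space structure on a topological space `X`: a set of continuous paths
`I → X` containing the constant paths, closed under concatenation and under
precomposition with continuous non-decreasing maps `I → I`. -/
structure DSpace (X : Type*) [TopologicalSpace X] where
  d : Set C(unitInterval, X)
  const_mem : ∀ x : X, ContinuousMap.const unitInterval x ∈ d
  concat_mem : ∀ p ∈ d, ∀ q ∈ d, ∀ h : p 1 = q 0, concatPath p q h ∈ d
  reparam_mem : ∀ p ∈ d, ∀ φ : C(unitInterval, unitInterval), Monotone ⇑φ → p.comp φ ∈ d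

/-- `c` is a directed function on the (open) set `U` for the set of directed
paths `d`: it is continuous on `U` and non-decreasing along every directed path
with image contained in `U`. -/
def IsDirectedFn {X : Type*} [TopologicalSpace X] (d : Set C(unitInterval, X))
    (U : Set X) (c : X → unitInterval) : Prop :=
  ContinuousOn c U ∧ ∀ p ∈ d, Set.range ⇑p ⊆ U → Monotone (c ∘ ⇑p)

/-- A path `p` is weakly directed when, for every directed function `c` on an
open `U`, the map `c ∘ p` is locally non-decreasing on `p ⁻¹' U`. -/
def IsWeaklyDirected {X : Type*} [TopologicalSpace X] (d : Set C(unitInterval, X))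
    (p : C(unitInterval, X)) : Prop :=
  ∀ U : Set X, IsOpen U → ∀ c : X → unitInterval, IsDirectedFn d U c →
    ∀ t : unitInterval, p t ∈ U →
      ∃ V ∈ 𝓝 t, V ⊆ ⇑p ⁻¹' U ∧ MonotoneOn (c ∘ ⇑p) V

/-- The set `d̂X` of weakly directed paths. -/
def satPaths {X : Type*} [TopologicalSpace X] (d : Set C(unitInterval, X)) :
    Set C(unitInterval, X) :=
  {p | IsWeaklyDirected d p}

/-- A set of directed paths is saturated when every weakly directed path is directed. -/
def IsSaturated {X : Type*} [TopologicalSpace X] (d : Set C(unitInterval, X)) : Prop :=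
  satPaths d = d

/-- The reversal `t ↦ 1 - t` of the unit interval, as a continuous map. -/
def revCM : C(unitInterval, unitInterval) :=
  ⟨unitInterval.symm, unitInterval.continuous_symm⟩

/-- The set of reversed directed paths `{t ↦ p(1 - t) : p ∈ d}`. -/
def revPaths {X : Type*} [TopologicalSpace X] (d : Set C(unitInterval, X)) :
    Set C(unitInterval, X) :=
  (fun p : C(unitInterval, X) => p.comp revCM) '' d

/- ### Auxiliary lemmas -/

lemma symm_le_symm_iff' {a b : unitInterval} : σ a ≤ σ b ↔ b ≤ a := by
  simp only [← Subtype.coe_le_coe, unitInterval.coe_symm_eq]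
  constructor <;> intro h <;> linarith

lemma revCM_apply (t : unitInterval) : revCM t = σ t := rfl

lemma comp_revCM_revCM {X : Type*} [TopologicalSpace X] (p : C(unitInterval, X)) :
    (p.comp revCM).comp revCM = p := by
  ext t
  simp [revCM, unitInterval.symm_symm]

lemma mem_revPaths_iff {X : Type*} [TopologicalSpace X] {d : Set C(unitInterval, X)}
    {p : C(unitInterval, X)} : p ∈ revPaths d ↔ p.comp revCM ∈ d := by
  constructor
  · rintro ⟨q, hq, rfl⟩
    rwa [comp_revCM_revCM]
  · intro hp
    exact ⟨p.comp revCM, hp, comp_revCM_revCM p⟩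

lemma concat_rev {X : Type*} [TopologicalSpace X] (P Q : C(unitInterval, X)) (h : Q 1 = P 0)
    (h2 : (P.comp revCM) 1 = (Q.comp revCM) 0) :
    concatPath (P.comp revCM) (Q.comp revCM) h2 = (concatPath Q P h).comp revCM := by
  ext t
  show ((⟨P.comp revCM, rfl, rfl⟩ : Path _ _).trans _) t
      = ((⟨Q, rfl, rfl⟩ : Path _ _).trans _) (σ t)
  rw [Path.trans_apply, Path.trans_apply]
  have hc : (σ t : ℝ) = 1 - t := unitInterval.coe_symm_eq t
  have ht0 := t.2.1
  have ht1 := t.2.2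
  split_ifs with h1 h3 h4
  · -- t ≤ 1/2, σ t ≤ 1/2, so t = 1/2
    have ht : (t : ℝ) = 1/2 := by rw [hc] at h3; linarith
    have m1 : 2 * (t:ℝ) ∈ unitInterval := ⟨by linarith, by linarith⟩
    have m2 : 2 * ((σ t):ℝ) ∈ unitInterval := ⟨by linarith [(σ t).2.1], by linarith⟩
    show P (σ ⟨2 * (t:ℝ), m1⟩) = Q ⟨2 * ((σ t):ℝ), m2⟩
    have e1 : σ (⟨2 * (t:ℝ), m1⟩ : unitInterval) = 0 := by
      ext; simp [unitInterval.coe_symm_eq, ht]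
    have e2 : (⟨2 * ((σ t):ℝ), m2⟩ : unitInterval) = 1 := by
      ext; simp [hc, ht]; norm_num
    rw [e1, e2, ← h]
  · -- t ≤ 1/2, σ t > 1/2
    push_neg at h3
    simp only [Path.cast_coe]
    have m1 : 2 * (t:ℝ) ∈ unitInterval := ⟨by linarith, by linarith⟩
    have m2 : 2 * ((σ t):ℝ) - 1 ∈ unitInterval := ⟨by linarith, by linarith [(σ t).2.2]⟩
    show P (σ ⟨2 * (t:ℝ), m1⟩) = P ⟨2 * ((σ t):ℝ) - 1, m2⟩
    congr 1
    ext
    simp [unitInterval.coe_symm_eq, hc]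
    ring
  · -- t > 1/2, σ t ≤ 1/2
    push_neg at h1
    simp only [Path.cast_coe]
    have m1 : 2 * (t:ℝ) - 1 ∈ unitInterval := ⟨by linarith, by linarith⟩
    have m2 : 2 * ((σ t):ℝ) ∈ unitInterval := ⟨by linarith [(σ t).2.1], by linarith [(σ t).2.2]⟩
    show Q (σ ⟨2 * (t:ℝ) - 1, m1⟩) = Q ⟨2 * ((σ t):ℝ), m2⟩
    congr 1
    ext
    simp [unitInterval.coe_symm_eq, hc]
    ring
  · exfalso; rw [hc] at h4; push_neg at h1 h4; linarith

lemma isDirectedFn_rev_iff {X : Type*} [TopologicalSpace X] (d : Set C(unitInterval, X))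
    (U : Set X) (c : X → unitInterval) :
    IsDirectedFn (revPaths d) U c ↔ IsDirectedFn d U (fun x => σ (c x)) := by
  constructor
  · rintro ⟨hc, hm⟩
    refine ⟨unitInterval.continuous_symm.comp_continuousOn hc, ?_⟩
    intro p hp hr s t hst
    have hrev : p.comp revCM ∈ revPaths d := ⟨p, hp, rfl⟩
    have hr' : Set.range ⇑(p.comp revCM) ⊆ U := by
      intro x hx
      obtain ⟨u, hu⟩ := hx
      exact hr ⟨σ u, hu⟩
    have hmono := hm (p.comp revCM) hrev hr'
    have : c (p t) ≤ c (p s) := by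
      have := hmono (a := σ t) (b := σ s) (symm_le_symm_iff'.mpr hst)
      simpa [revCM, unitInterval.symm_symm] using this
    exact symm_le_symm_iff'.mpr this
  · rintro ⟨hc, hm⟩
    have hcc : ContinuousOn c U := by
      have : ContinuousOn (fun x => σ (σ (c x))) U :=
        unitInterval.continuous_symm.comp_continuousOn hc
      simpa [unitInterval.symm_symm] using this
    refine ⟨hcc, ?_⟩
    rintro p ⟨q, hq, rfl⟩ hr s t hst
    have hr' : Set.range ⇑q ⊆ U := by
      intro x hx
      obtain ⟨u, hu⟩ := hx
      refine hr ⟨σ u, ?_⟩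
      simp [revCM, unitInterval.symm_symm, hu]
    have hmono := hm q hq hr'
    have h2 := hmono (a := σ t) (b := σ s) (symm_le_symm_iff'.mpr hst)
    simp only [Function.comp_apply] at h2
    have : c (q (σ s)) ≤ c (q (σ t)) := symm_le_symm_iff'.mp h2
    simpa [revCM] using this

/-- Transfer of weak directedness through reversal. -/
lemma isWeaklyDirected_rev {X : Type*} [TopologicalSpace X]
    (d₁ d₂ : Set C(unitInterval, X))
    (hfn : ∀ U : Set X, IsOpen U → ∀ c : X → unitInterval,
      IsDirectedFn d₂ U c → IsDirectedFn d₁ U (fun x => σ (c x)))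
    (p : C(unitInterval, X)) (hp : IsWeaklyDirected d₁ p) :
    IsWeaklyDirected d₂ (p.comp revCM) := by
  intro U hU c hc t ht
  obtain ⟨V, hV, hVU, hVm⟩ := hp U hU (fun x => σ (c x)) (hfn U hU c hc) (σ t) ht
  refine ⟨(fun s => σ s) ⁻¹' V, ?_, ?_, ?_⟩
  · have : ContinuousAt (fun s : unitInterval => σ s) t := unitInterval.continuous_symm.continuousAt
    have := this.preimage_mem_nhds (by simpa using hV)
    exact this
  · intro s hs
    exact hVU hs
  · intro s₁ hs₁ s₂ hs₂ hle
    have := hVm hs₂ hs₁ (symm_le_symm_iff'.mpr hle)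
    simp only [Function.comp_apply] at this ⊢
    exact symm_le_symm_iff'.mp this

/-- Saturated d-spaces are stable under reversion: for a saturated d-space
`(X, dX)`, the reversed paths `RdX` form a d-space structure; directed functions of
`(X, RdX)` on an open `U` are exactly the maps `c` with `1 - c` a directed function
of `(X, dX)` on `U`; and `(X, RdX)` is saturated. -/
theorem stmt_18 {X : Type*} [TopologicalSpace X] (D : DSpace X) (hD : IsSaturated D.d) :
    (∀ x : X, ContinuousMap.const unitInterval x ∈ revPaths D.d) ∧
    (∀ p ∈ revPaths D.d, ∀ q ∈ revPaths D.d, ∀ h : p 1 = q 0,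
      concatPath p q h ∈ revPaths D.d) ∧
    (∀ p ∈ revPaths D.d, ∀ φ : C(unitInterval, unitInterval), Monotone ⇑φ →
      p.comp φ ∈ revPaths D.d) ∧
    (∀ U : Set X, IsOpen U → ∀ c : X → unitInterval,
      (IsDirectedFn (revPaths D.d) U c ↔
        IsDirectedFn D.d U (fun x => unitInterval.symm (c x)))) ∧
    IsSaturated (revPaths D.d) := by
  refine ⟨?_, ?_, ?_, ?_, ?_⟩
  · intro x
    exact ⟨ContinuousMap.const unitInterval x, D.const_mem x, by ext t; rfl⟩
  · rintro p ⟨P, hP, rfl⟩ q ⟨Q, hQ, rfl⟩ h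
    have h' : Q 1 = P 0 := by
      have := h
      simpa [revCM, show σ (1:unitInterval) = 0 from by simp,
        show σ (0:unitInterval) = 1 from by simp] using this.symm
    rw [concat_rev P Q h' h]
    exact ⟨concatPath Q P h', D.concat_mem Q hQ P hP h', rfl⟩
  · rintro p ⟨P, hP, rfl⟩ φ hφ
    have key : (P.comp revCM).comp φ = (P.comp (revCM.comp (φ.comp revCM))).comp revCM := by
      ext t
      simp [revCM, unitInterval.symm_symm]
    rw [key]
    refine ⟨_, D.reparam_mem P hP (revCM.comp (φ.comp revCM)) ?_, rfl⟩
    intro a b hab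
    exact symm_le_symm_iff'.mpr (hφ (symm_le_symm_iff'.mpr hab))
  · exact fun U hU c => isDirectedFn_rev_iff D.d U c
  · apply Set.eq_of_subset_of_subset
    · intro p hp
      have h1 : IsWeaklyDirected D.d (p.comp revCM) := by
        apply isWeaklyDirected_rev (revPaths D.d) D.d
        · intro U hU c hc
          have : IsDirectedFn (revPaths D.d) U (fun x => σ (c x)) := by
            rw [isDirectedFn_rev_iff]
            simpa [unitInterval.symm_symm] using hc
          exact this
        · exact hp
      have h2 : p.comp revCM ∈ D.d := by
        rw [← hD]; exact h1
      rw [mem_revPaths_iff]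
      exact h2
    · rintro p ⟨q, hq, rfl⟩
      have hq' : IsWeaklyDirected D.d q := by rw [IsSaturated] at hD; rw [← hD] at hq; exact hq
      exact isWeaklyDirected_rev D.d (revPaths D.d)
        (fun U hU c hc => (isDirectedFn_rev_iff D.d U c).mp hc) q hq'
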